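/- Let A be an elementary abelian 3-group of rank r+1, and let b be the automorphism of A inverting every element. In the semidirect product G = A ⋊ ⟨b⟩, the minimal Engel sink E(b) of the element b generates the whole subgroup A, which has rank r+1. -/

import Mathlib

/-- Left-normed iterated commutator `[x, g, g, …, g]` (with `g` repeated `n` times),
where `[x, g] = x⁻¹ g⁻¹ x g`. -/
def engel {G : Type*} [Group G] (g : G) : ℕ → G → G
  | 0, x => x
  | n + 1, x => (engel g n x)⁻¹ * g⁻¹ * engel g n x * g

/-- The minimal Engel sink of `g` in a finite group: the set of values attained by
`[x, g, …, g]` for arbitrarily large lengths. -/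
def engelSink {G : Type*} [Group G] (g : G) : Set G :=
  {y | ∀ N : ℕ, ∃ n, N ≤ n ∧ ∃ x : G, engel g n x = y}

/-- `G` has rank at most `s`: every subgroup is generated by at most `s` elements. -/
def rankAtMost (G : Type*) [Group G] (s : ℕ) : Prop :=
  ∀ H : Subgroup G, ∃ S : Finset G, S.card ≤ s ∧ Subgroup.closure (S : Set G) = H

/-- The elementary abelian `3`-group of rank `r+1`, written multiplicatively. -/
abbrev elemAb3 (r : ℕ) : Type := Multiplicative (Fin (r + 1) → ZMod 3)

namespace Stmt14Aux

lemma engel_succ' {G : Type*} [Group G] (g : G) (n : ℕ) (x : G) :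
    engel g (n + 1) x = engel g n (engel g 1 x) := by
  induction n with
  | zero => rfl
  | succ n ih => show _ = (engel g n (engel g 1 x))⁻¹ * g⁻¹ * engel g n (engel g 1 x) * g
                 rw [← ih]; rfl

variable (r : ℕ)

abbrev βe : elemAb3 r ≃* elemAb3 r := MulEquiv.inv (elemAb3 r)

abbrev Gr : Type _ :=
  elemAb3 r ⋊[(Subgroup.zpowers (βe r)).subtype] ↥(Subgroup.zpowers (βe r))

abbrev be : ↥(Subgroup.zpowers (βe r)) := ⟨βe r, Subgroup.mem_zpowers _⟩

abbrev bb : Gr r := SemidirectProduct.inr (be r)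

lemma cube (a : elemAb3 r) : a⁻¹ * a⁻¹ = a := by
  have h : ∀ x : ZMod 3, -x + -x = x := by decide
  apply Multiplicative.toAdd.injective
  show -a.toAdd + -a.toAdd = a.toAdd
  funext i
  exact h _

lemma be_sq : be r * be r = 1 := by
  apply Subtype.ext
  show βe r * βe r = 1
  refine MulEquiv.ext fun a => ?_
  show (βe r) ((βe r) a) = a
  simp

lemma bb_inv : (bb r)⁻¹ = bb r := by
  rw [inv_eq_iff_mul_eq_one, ← map_mul, be_sq, map_one]

lemma conj_inl (a : elemAb3 r) :
    (bb r)⁻¹ * SemidirectProduct.inl a * bb r = SemidirectProduct.inl a⁻¹ := by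
  have h := SemidirectProduct.inl_aut (φ := (Subgroup.zpowers (βe r)).subtype) (be r) a
  have h2 : ((Subgroup.zpowers (βe r)).subtype (be r)) a = a⁻¹ := by
    simp [Subgroup.coe_subtype]
  rw [h2] at h
  rw [bb_inv, h, map_inv, bb_inv]

lemma step (a : elemAb3 r) :
    (SemidirectProduct.inl a)⁻¹ * (bb r)⁻¹ * SemidirectProduct.inl a * bb r
      = SemidirectProduct.inl a := by
  have := conj_inl r a
  calc (SemidirectProduct.inl a)⁻¹ * (bb r)⁻¹ * SemidirectProduct.inl a * bb r
      = (SemidirectProduct.inl a)⁻¹ * ((bb r)⁻¹ * SemidirectProduct.inl a * bb r) := by group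
    _ = (SemidirectProduct.inl a)⁻¹ * SemidirectProduct.inl a⁻¹ := by rw [this]
    _ = SemidirectProduct.inl (a⁻¹ * a⁻¹) := by rw [← map_inv, ← map_mul]
    _ = SemidirectProduct.inl a := by rw [cube]

lemma engel_inl (n : ℕ) (a : elemAb3 r) :
    engel (bb r) n (SemidirectProduct.inl a) = SemidirectProduct.inl a := by
  induction n with
  | zero => rfl
  | succ n ih =>
      show (engel (bb r) n _)⁻¹ * (bb r)⁻¹ * engel (bb r) n _ * bb r = _
      rw [ih, step]

lemma engel_one (x : Gr r) : ∃ a : elemAb3 r,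
    engel (bb r) 1 x = SemidirectProduct.inl a := by
  obtain ⟨k, hk⟩ := x.right.2
  have hxr : x.right = (be r) ^ k := by
    apply Subtype.ext
    rw [← hk]
    simp
  have hc : Commute x.right (be r) := by
    rw [hxr]; exact (Commute.refl (be r)).zpow_left k
  have hright : (engel (bb r) 1 x).right = 1 := by
    show (x⁻¹ * (bb r)⁻¹ * x * bb r).right = 1
    have : (x⁻¹ * (bb r)⁻¹ * x * bb r).right
        = x.right⁻¹ * (be r)⁻¹ * x.right * be r := by
      simp [SemidirectProduct.right_inr]
    rw [this, mul_assoc x.right⁻¹ (be r)⁻¹ x.right, hc.inv_right.symm.eq]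
    group
  refine ⟨(engel (bb r) 1 x).left, ?_⟩
  ext
  · simp
  · rw [hright, SemidirectProduct.right_inl]

lemma sink_eq : engelSink (bb r) = ((SemidirectProduct.inl :
    elemAb3 r →* Gr r).range : Set (Gr r)) := by
  ext y
  constructor
  · intro hy
    obtain ⟨n, hn, x, hx⟩ := hy 1
    obtain ⟨m, rfl⟩ : ∃ m, n = m + 1 := ⟨n - 1, by omega⟩
    obtain ⟨a, ha⟩ := engel_one r x
    rw [engel_succ', ha, engel_inl] at hx
    exact ⟨a, hx⟩
  · rintro ⟨a, rfl⟩ N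
    exact ⟨N, le_refl N, SemidirectProduct.inl a, engel_inl r N a⟩

/-! ### Linear algebra side -/

abbrev V : Type := Fin (r + 1) → ZMod 3

lemma span_eq_closure (t : Set (V r)) :
    ((Submodule.span (ZMod 3) t : Submodule (ZMod 3) (V r)) : Set (V r))
      = (AddSubgroup.closure t : Set (V r)) := by
  apply le_antisymm
  · have : Submodule.span (ZMod 3) t ≤ AddSubgroup.toZModSubmodule 3 (AddSubgroup.closure t) :=
      Submodule.span_le.2 AddSubgroup.subset_closure
    exact this
  · exact AddSubgroup.closure_le ((Submodule.span (ZMod 3) t).toAddSubgroup) |>.2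
      Submodule.subset_span

lemma mem_toSubgroup {A : Type*} [AddGroup A] (S : AddSubgroup A) (x : Multiplicative A) :
    x ∈ AddSubgroup.toSubgroup S ↔ x.toAdd ∈ S := Iff.rfl

lemma mem_toAddSubgroup' {A : Type*} [AddGroup A] (H : Subgroup (Multiplicative A)) (v : A) :
    v ∈ Subgroup.toAddSubgroup' H ↔ Multiplicative.ofAdd v ∈ H := Iff.rfl

lemma closure_bridge (t : Set (V r)) :
    Subgroup.toAddSubgroup' (Subgroup.closure (Multiplicative.ofAdd '' t))
      = (AddSubgroup.closure t : AddSubgroup (V r)) := by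
  apply le_antisymm
  · intro v hv
    have h : Subgroup.closure (Multiplicative.ofAdd '' t)
        ≤ AddSubgroup.toSubgroup (AddSubgroup.closure t : AddSubgroup (V r)) := by
      apply Subgroup.closure_le _ |>.2
      rintro x ⟨w, hw, rfl⟩
      exact (mem_toSubgroup _ _).2 (AddSubgroup.subset_closure hw)
    exact (mem_toSubgroup _ _).1 (h ((mem_toAddSubgroup' _ _).1 hv))
  · apply AddSubgroup.closure_le _ |>.2
    intro v hv
    exact (mem_toAddSubgroup' _ _).2 (Subgroup.subset_closure ⟨v, hv, rfl⟩)

end Stmt14Aux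

/-- In the semidirect product `A ⋊ ⟨b⟩`, where `A` is elementary abelian of exponent 3
and rank `r+1` and `b` is the inverting automorphism, the minimal Engel sink of `b`
generates the whole of `A`, which has rank exactly `r+1`. -/
theorem stmt14 (r : ℕ) :
    (Subgroup.closure
        (engelSink
          (SemidirectProduct.inr
              ⟨MulEquiv.inv (elemAb3 r), Subgroup.mem_zpowers _⟩ :
            elemAb3 r ⋊[(Subgroup.zpowers (MulEquiv.inv (elemAb3 r))).subtype]
              ↥(Subgroup.zpowers (MulEquiv.inv (elemAb3 r))))) =
      (SemidirectProduct.inl :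
        elemAb3 r →*
          elemAb3 r ⋊[(Subgroup.zpowers (MulEquiv.inv (elemAb3 r))).subtype]
            ↥(Subgroup.zpowers (MulEquiv.inv (elemAb3 r)))).range) ∧
      rankAtMost (elemAb3 r) (r + 1) ∧
      ∀ s : ℕ, rankAtMost (elemAb3 r) s → r + 1 ≤ s := by
  haveI : Fact (Nat.Prime 3) := ⟨by norm_num⟩
  refine ⟨?_, ?_, ?_⟩
  · rw [Stmt14Aux.sink_eq r, Subgroup.closure_eq]
  · intro H
    classical
    set p : Submodule (ZMod 3) (Stmt14Aux.V r) :=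
      AddSubgroup.toZModSubmodule 3 (Subgroup.toAddSubgroup' H) with hp
    haveI : Module.Finite (ZMod 3) (Stmt14Aux.V r) := inferInstance
    let bB := Module.finBasis (ZMod 3) p
    let g : Fin (Module.finrank (ZMod 3) p) → Stmt14Aux.V r := fun i => (bB i : Stmt14Aux.V r)
    let f : Fin (Module.finrank (ZMod 3) p) → elemAb3 r :=
      fun i => Multiplicative.ofAdd (g i)
    have hspan : Submodule.span (ZMod 3) (Set.range g) = p := by
      have h1 := bB.span_eq
      have h2 : Submodule.map p.subtype (Submodule.span (ZMod 3) (Set.range bB)) = p := by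
        rw [h1, Submodule.map_subtype_top]
      rw [Submodule.map_span] at h2
      have h4 : Set.range g = ⇑p.subtype '' Set.range ⇑bB := by
        rw [← Set.range_comp]; rfl
      rw [h4]; exact h2
    refine ⟨Finset.image f Finset.univ, ?_, ?_⟩
    · calc (Finset.image f Finset.univ).card ≤ Finset.univ.card := Finset.card_image_le
        _ = Module.finrank (ZMod 3) p := by simp
        _ ≤ Module.finrank (ZMod 3) (Stmt14Aux.V r) := p.finrank_le
        _ = r + 1 := Module.finrank_fin_fun (ZMod 3)
    · have hset : ((Finset.image f Finset.univ : Finset (elemAb3 r)) : Set (elemAb3 r))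
          = Multiplicative.ofAdd '' Set.range g := by
        rw [Finset.coe_image, Finset.coe_univ, Set.image_univ]
        show Set.range (⇑Multiplicative.ofAdd ∘ g) = _
        exact Set.range_comp _ _
      apply Subgroup.toAddSubgroup'.injective
      rw [hset, Stmt14Aux.closure_bridge]
      apply SetLike.ext'
      rw [← Stmt14Aux.span_eq_closure, hspan]
      rfl
  · intro s hs
    obtain ⟨S, hcard, hcl⟩ := hs ⊤
    classical
    let T : Finset (Stmt14Aux.V r) := S.image Multiplicative.toAdd
    have hst : Multiplicative.ofAdd '' ((T : Finset (Stmt14Aux.V r)) : Set (Stmt14Aux.V r))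
        = ((S : Finset (elemAb3 r)) : Set (elemAb3 r)) := by
      simp only [T, Finset.coe_image, ← Set.image_comp]
      exact Set.image_id _
    have hT : Submodule.span (ZMod 3) ((T : Finset (Stmt14Aux.V r)) : Set (Stmt14Aux.V r)) = ⊤ := by
      rw [Submodule.eq_top_iff']
      intro v
      have h1 : Multiplicative.ofAdd v ∈ Subgroup.closure ((S : Finset (elemAb3 r)) : Set (elemAb3 r)) := by
        rw [hcl]; exact Subgroup.mem_top _
      have h2 : v ∈ AddSubgroup.closure ((T : Finset (Stmt14Aux.V r)) : Set (Stmt14Aux.V r)) := by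
        rw [← Stmt14Aux.closure_bridge]
        exact (Stmt14Aux.mem_toAddSubgroup' _ _).2 (by rw [hst]; exact h1)
      rw [← SetLike.mem_coe, Stmt14Aux.span_eq_closure]
      exact h2
    have hmain : r + 1 ≤ T.card := by
      have h3 : Set.finrank (ZMod 3) ((T : Finset (Stmt14Aux.V r)) : Set (Stmt14Aux.V r)) ≤ T.card :=
        finrank_span_finset_le_card T
      calc r + 1 = Module.finrank (ZMod 3) (Stmt14Aux.V r) := (Module.finrank_fin_fun (ZMod 3)).symm
        _ = Module.finrank (ZMod 3) (⊤ : Submodule (ZMod 3) (Stmt14Aux.V r)) := (finrank_top _ _).symm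
        _ = Module.finrank (ZMod 3)
              (Submodule.span (ZMod 3) ((T : Finset (Stmt14Aux.V r)) : Set (Stmt14Aux.V r))) := by
            rw [hT]
        _ ≤ T.card := h3
    exact le_trans hmain (le_trans Finset.card_image_le hcard)
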